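/- Let A = {*2} be the game whose unique option is nim 2, let B = {*3; A} be the game whose options are nim 3 and A, and let G = {*0; A; B} be the game whose options are the empty game 0, A and B. Then the disjunctive sum G + nim 2 is misère-indistinguishable from A. -/

import Mathlib

/-- An impartial game: a position is given by the list of its options
(the positions reachable in one move); both players have the same moves. -/
inductive Game : Type
  | node : List Game → Game

namespace Game

/-- The options of a position. -/
def options : Game → List Game
  | node l => l

/-- Disjunctive sum of two games: a move is made in exactly one component. -/
def add : Game → Game → Game
  | node l, node r =>
      node ((l.attach.map fun x => add x.1 (node r)) ++
            (r.attach.map fun y => add (node l) y.1))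
termination_by g h => sizeOf g + sizeOf h
decreasing_by
  · have := List.sizeOf_lt_of_mem x.2; simp_wf; (try simp only [Game.node.sizeOf_spec] at *); omega
  · have := List.sizeOf_lt_of_mem y.2; simp_wf; (try simp only [Game.node.sizeOf_spec] at *); omega

/-- Misère win (for the player to move): the game has no options,
or some option is a misère loss. -/
def MisereWin : Game → Prop
  | node l => l = [] ∨ ∃ x : {a // a ∈ l}, ¬ MisereWin x.1
decreasing_by
  simp_wf; have := List.sizeOf_lt_of_mem x.2; omega

/-- Misère indistinguishability: adding any game `T` yields the same misère outcome. -/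
def Indist (G H : Game) : Prop :=
  ∀ T : Game, MisereWin (add G T) ↔ MisereWin (add H T)

/-- The Nim-heap of size `n`, whose options are `nim 0, …, nim (n-1)`. -/
def nim : ℕ → Game
  | 0 => node []
  | n + 1 => node ((nim n).options ++ [nim n])

/-- Normal-play win (for the player to move): some option is a normal-play loss.
A player unable to move loses. -/
def NormalWin : Game → Prop
  | node l => ∃ x : {a // a ∈ l}, ¬ NormalWin x.1
decreasing_by
  simp_wf; have := List.sizeOf_lt_of_mem x.2; omega

/-- The Grundy value: the mex of the Grundy values of the options. -/
noncomputable def grundy : Game → ℕ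
  | node l => sInf {n : ℕ | ∀ x : {a // a ∈ l}, grundy x.1 ≠ n}
decreasing_by
  simp_wf; have := List.sizeOf_lt_of_mem x.2; omega

/-- The height of a game: the maximal number of moves in a play from it. -/
def height : Game → ℕ
  | node l => (l.attach.map fun x => height x.1 + 1).foldr max 0
decreasing_by
  simp_wf; have := List.sizeOf_lt_of_mem x.2; omega

/-- A canonical tree: duplicate options are removed, hereditarily. -/
def Canonical : Game → Prop
  | node l => l.Nodup ∧ ∀ x : {a // a ∈ l}, Canonical x.1
decreasing_by
  simp_wf; have := List.sizeOf_lt_of_mem x.2; omega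

/-- Extensional (set-theoretic) equality of game trees. -/
def ExtEq : Game → Game → Prop
  | node l, node r =>
      (∀ x : {a // a ∈ l}, ∃ y : {b // b ∈ r}, ExtEq x.1 y.1) ∧
      (∀ y : {b // b ∈ r}, ∃ x : {a // a ∈ l}, ExtEq x.1 y.1)
termination_by g _ => sizeOf g
decreasing_by
  · have := List.sizeOf_lt_of_mem x.2; simp_wf; (try simp only [Game.node.sizeOf_spec] at *); omega
  · have := List.sizeOf_lt_of_mem x.2; simp_wf; (try simp only [Game.node.sizeOf_spec] at *); omega

/-- The disjunctive sum of `n` copies of a game. -/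
def copies : ℕ → Game → Game
  | 0, _ => node []
  | n + 1, g => add g (copies n g)

/-- `G` is a reducer of `H` if `H` is obtained from `G` by adding reversible
moves `R₁, R₂, …`: the options of `H` are those of `G` together with the `Rⱼ`,
each `Rⱼ` having `G` among its options; when `G` is empty one additionally
requires `H` to be a misère win. -/
def Reducer (G H : Game) : Prop :=
  ∃ Rs : List Game,
    (∀ x, x ∈ H.options ↔ x ∈ G.options ∨ x ∈ Rs) ∧
    (∀ R ∈ Rs, G ∈ R.options) ∧
    (G.options = [] → MisereWin H)

/-- A canonical tree is reduced if its only reducer is itself (as a set of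
options) and all of its options are reduced. -/
def Reduced : Game → Prop
  | node l =>
      (∀ G, Reducer G (node l) → ∀ x, x ∈ G.options ↔ x ∈ l) ∧
      ∀ x : {a // a ∈ l}, Reduced x.1
decreasing_by
  simp_wf; have := List.sizeOf_lt_of_mem x.2; omega

end Game

namespace Game

theorem win_node (l : List Game) :
    MisereWin (node l) ↔ l = [] ∨ ∃ x ∈ l, ¬ MisereWin x := by
  rw [MisereWin]; simp

theorem add_node (l r : List Game) :
    add (node l) (node r) =
      node ((l.map fun x => add x (node r)) ++ (r.map fun y => add (node l) y)) := by
  rw [add]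
  congr 1 <;> simp [List.map_subtype]

theorem win_add (l r : List Game) :
    MisereWin (add (node l) (node r)) ↔
      (l = [] ∧ r = []) ∨ (∃ a ∈ l, ¬ MisereWin (add a (node r))) ∨
        (∃ b ∈ r, ¬ MisereWin (add (node l) b)) := by
  rw [add_node, win_node]
  simp only [List.mem_append, List.mem_map, List.append_eq_nil_iff, List.map_eq_nil_iff]
  constructor
  · rintro (⟨h1, h2⟩ | ⟨x, (⟨a, ha, rfl⟩ | ⟨b, hb, rfl⟩), hx⟩)
    · exact Or.inl ⟨h1, h2⟩
    · exact Or.inr (Or.inl ⟨a, ha, hx⟩)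
    · exact Or.inr (Or.inr ⟨b, hb, hx⟩)
  · rintro (⟨rfl, rfl⟩ | ⟨a, ha, hx⟩ | ⟨b, hb, hx⟩)
    · exact Or.inl ⟨rfl, rfl⟩
    · exact Or.inr ⟨_, Or.inl ⟨a, ha, rfl⟩, hx⟩
    · exact Or.inr ⟨_, Or.inr ⟨b, hb, rfl⟩, hx⟩

theorem ext_node (l r : List Game) :
    ExtEq (node l) (node r) ↔
      (∀ x ∈ l, ∃ y ∈ r, ExtEq x y) ∧ (∀ y ∈ r, ∃ x ∈ l, ExtEq x y) := by
  rw [ExtEq]; simp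

end Game
namespace Game

theorem size_node (l : List Game) : sizeOf (node l) = 1 + sizeOf l := by simp

theorem size_mem {x : Game} {l : List Game} (h : x ∈ l) : sizeOf x < sizeOf l :=
  List.sizeOf_lt_of_mem h

theorem ext_win_aux : ∀ n (G H : Game), sizeOf G + sizeOf H ≤ n → ExtEq G H →
    (MisereWin G ↔ MisereWin H) := by
  intro n
  induction n with
  | zero => intro ⟨l⟩ ⟨r⟩ h; rw [size_node, size_node] at h; omega
  | succ n ih =>
    intro ⟨l⟩ ⟨r⟩ hn h
    rw [size_node, size_node] at hn
    rw [ext_node] at h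
    obtain ⟨h1, h2⟩ := h
    rw [win_node, win_node]
    constructor
    · rintro (rfl | ⟨x, hx, hw⟩)
      · rcases r with _ | ⟨y, r⟩
        · exact Or.inl rfl
        · obtain ⟨x, hx, -⟩ := h2 y List.mem_cons_self
          exact absurd hx List.not_mem_nil
      · obtain ⟨y, hy, hxy⟩ := h1 x hx
        have sx := size_mem hx; have sy := size_mem hy
        exact Or.inr ⟨y, hy, fun w => hw ((ih x y (by omega) hxy).mpr w)⟩
    · rintro (rfl | ⟨y, hy, hw⟩)
      · rcases l with _ | ⟨x, l⟩
        · exact Or.inl rfl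
        · obtain ⟨y, hy, -⟩ := h1 x List.mem_cons_self
          exact absurd hy List.not_mem_nil
      · obtain ⟨x, hx, hxy⟩ := h2 y hy
        have sx := size_mem hx; have sy := size_mem hy
        exact Or.inr ⟨x, hx, fun w => hw ((ih x y (by omega) hxy).mp w)⟩

theorem ext_win {G H : Game} (h : ExtEq G H) : MisereWin G ↔ MisereWin H :=
  ext_win_aux _ G H le_rfl h

theorem add_ext_aux : ∀ n (X Y T : Game), sizeOf X + sizeOf T ≤ n → ExtEq X Y →
    ExtEq (add X T) (add Y T) := by
  intro n
  induction n with
  | zero => intro ⟨l⟩ ⟨r⟩ ⟨ts⟩ h; rw [size_node, size_node] at h; omega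
  | succ n ih =>
    intro ⟨l⟩ ⟨r⟩ ⟨ts⟩ hn h
    rw [size_node, size_node] at hn
    rw [ext_node] at h
    obtain ⟨h1, h2⟩ := h
    rw [add_node, add_node, ext_node]
    constructor
    · intro u hu
      rcases List.mem_append.mp hu with hu | hu
      · obtain ⟨a, ha, rfl⟩ := List.mem_map.mp hu
        obtain ⟨b, hb, hab⟩ := h1 a ha
        have := size_mem ha
        exact ⟨add b (node ts), List.mem_append.mpr (Or.inl (List.mem_map.mpr ⟨b, hb, rfl⟩)),
          ih a b (node ts) (by rw [size_node]; omega) hab⟩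
      · obtain ⟨t, ht, rfl⟩ := List.mem_map.mp hu
        have := size_mem ht
        exact ⟨add (node r) t, List.mem_append.mpr (Or.inr (List.mem_map.mpr ⟨t, ht, rfl⟩)),
          ih (node l) (node r) t (by rw [size_node]; omega) ((ext_node l r).mpr ⟨h1, h2⟩)⟩
    · intro u hu
      rcases List.mem_append.mp hu with hu | hu
      · obtain ⟨b, hb, rfl⟩ := List.mem_map.mp hu
        obtain ⟨a, ha, hab⟩ := h2 b hb
        have := size_mem ha
        exact ⟨add a (node ts), List.mem_append.mpr (Or.inl (List.mem_map.mpr ⟨a, ha, rfl⟩)),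
          ih a b (node ts) (by rw [size_node]; omega) hab⟩
      · obtain ⟨t, ht, rfl⟩ := List.mem_map.mp hu
        have := size_mem ht
        exact ⟨add (node l) t, List.mem_append.mpr (Or.inr (List.mem_map.mpr ⟨t, ht, rfl⟩)),
          ih (node l) (node r) t (by rw [size_node]; omega) ((ext_node l r).mpr ⟨h1, h2⟩)⟩

theorem add_ext {X Y : Game} (T : Game) (h : ExtEq X Y) : ExtEq (add X T) (add Y T) :=
  add_ext_aux _ X Y T le_rfl h

theorem winL_congr {X Y : Game} (T : Game) (h : ExtEq X Y) :
    MisereWin (add X T) ↔ MisereWin (add Y T) :=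
  ext_win (add_ext T h)

theorem ext_zeroL_aux : ∀ n (X : Game), sizeOf X ≤ n → ExtEq (add (node []) X) X := by
  intro n
  induction n with
  | zero => intro ⟨l⟩ h; rw [size_node] at h; omega
  | succ n ih =>
    intro ⟨l⟩ hn
    rw [size_node] at hn
    rw [add_node, ext_node]
    simp only [List.map_nil, List.nil_append, List.mem_map]
    constructor
    · rintro u ⟨y, hy, rfl⟩
      have := size_mem hy
      exact ⟨y, hy, ih y (by omega)⟩
    · intro y hy
      have := size_mem hy
      exact ⟨add (node []) y, ⟨y, hy, rfl⟩, ih y (by omega)⟩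

theorem ext_zeroL (X : Game) : ExtEq (add (node []) X) X := ext_zeroL_aux _ X le_rfl

theorem ext_zeroR_aux : ∀ n (X : Game), sizeOf X ≤ n → ExtEq (add X (node [])) X := by
  intro n
  induction n with
  | zero => intro ⟨l⟩ h; rw [size_node] at h; omega
  | succ n ih =>
    intro ⟨l⟩ hn
    rw [size_node] at hn
    rw [add_node, ext_node]
    simp only [List.map_nil, List.append_nil, List.mem_map]
    constructor
    · rintro u ⟨x, hx, rfl⟩
      have := size_mem hx
      exact ⟨x, hx, ih x (by omega)⟩
    · intro x hx
      have := size_mem hx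
      exact ⟨add x (node []), ⟨x, hx, rfl⟩, ih x (by omega)⟩

theorem ext_zeroR (X : Game) : ExtEq (add X (node [])) X := ext_zeroR_aux _ X le_rfl

end Game
namespace Game

-- abbreviations
def gA : Game := node [nim 2]
def gB : Game := node [nim 3, gA]
def gG : Game := node [node [], gA, gB]

theorem nim1_eq : nim 1 = node [nim 0] := rfl
theorem nim2_eq : nim 2 = node [nim 0, nim 1] := rfl
theorem nim3_eq : nim 3 = node [nim 0, nim 1, nim 2] := rfl
theorem nim0_eq : nim 0 = node [] := rfl

-- node forms of compound left summands
theorem S11 : add (nim 1) (nim 1) = node [add (nim 0) (nim 1), add (nim 1) (nim 0)] := by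
  show add (node [nim 0]) (node [nim 0]) = _
  rw [add_node]; rfl

theorem S21 : add (nim 2) (nim 1) =
    node [add (nim 0) (nim 1), add (nim 1) (nim 1), add (nim 2) (nim 0)] := by
  show add (node [nim 0, nim 1]) (node [nim 0]) = _
  rw [add_node]; rfl

theorem S31 : add (nim 3) (nim 1) =
    node [add (nim 0) (nim 1), add (nim 1) (nim 1), add (nim 2) (nim 1),
      add (nim 3) (nim 0)] := by
  show add (node [nim 0, nim 1, nim 2]) (node [nim 0]) = _
  rw [add_node]; rfl

theorem SA1 : add gA (nim 1) = node [add (nim 2) (nim 1), add gA (nim 0)] := by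
  show add (node [nim 2]) (node [nim 0]) = _
  rw [add_node]; rfl

theorem SA2 : add gA (nim 2) =
    node [add (nim 2) (nim 2), add gA (nim 0), add gA (nim 1)] := by
  show add (node [nim 2]) (node [nim 0, nim 1]) = _
  rw [add_node]; rfl

theorem SB1 : add gB (nim 1) =
    node [add (nim 3) (nim 1), add gA (nim 1), add gB (nim 0)] := by
  show add (node [nim 3, gA]) (node [nim 0]) = _
  rw [add_node]; rfl

theorem SB2 : add gB (nim 2) =
    node [add (nim 3) (nim 2), add gA (nim 2), add gB (nim 0), add gB (nim 1)] := by
  show add (node [nim 3, gA]) (node [nim 0, nim 1]) = _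
  rw [add_node]; rfl

theorem SG2 : add gG (nim 2) =
    node [add (node []) (nim 2), add gA (nim 2), add gB (nim 2),
      add gG (nim 0), add gG (nim 1)] := by
  show add (node [node [], gA, gB]) (node [nim 0, nim 1]) = _
  rw [add_node]; rfl

theorem SG1 : add gG (nim 1) =
    node [add (node []) (nim 1), add gA (nim 1), add gB (nim 1), add gG (nim 0)] := by
  show add (node [node [], gA, gB]) (node [nim 0]) = _
  rw [add_node]; rfl

-- if a sum is a loss, any option (from either component) is a win
theorem win_of_loss_memL {l ts : List Game} {Y : Game}
    (h : ¬ MisereWin (add (node l) (node ts))) (hY : Y ∈ l) :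
    MisereWin (add Y (node ts)) := by
  by_contra hw
  exact h ((win_add l ts).mpr (Or.inr (Or.inl ⟨Y, hY, hw⟩)))

theorem win_of_loss_memR {l ts : List Game} {t : Game}
    (h : ¬ MisereWin (add (node l) (node ts))) (ht : t ∈ ts) :
    MisereWin (add (node l) t) := by
  by_contra hw
  exact h ((win_add l ts).mpr (Or.inr (Or.inr ⟨t, ht, hw⟩)))

-- a sum with a losing option is a win
theorem win_of_memL {l ts : List Game} {Y : Game}
    (hY : Y ∈ l) (h : ¬ MisereWin (add Y (node ts))) :
    MisereWin (add (node l) (node ts)) :=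
  (win_add l ts).mpr (Or.inr (Or.inl ⟨Y, hY, h⟩))

theorem win_of_memR {l ts : List Game} {t : Game}
    (ht : t ∈ ts) (h : ¬ MisereWin (add (node l) t)) :
    MisereWin (add (node l) (node ts)) :=
  (win_add l ts).mpr (Or.inr (Or.inr ⟨t, ht, h⟩))

-- a misère loss of 0 + T propagates
theorem win_zero_add {T : Game} : MisereWin (add (node []) T) ↔ MisereWin T :=
  ext_win (ext_zeroL T)

-- *1 + T a loss implies T a win
theorem win_of_loss_g1 {T : Game} (h : ¬ MisereWin (add (nim 1) T)) : MisereWin T := by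
  obtain ⟨ts⟩ := T
  have h' : ¬ MisereWin (add (node [nim 0]) (node ts)) := h
  have h2 := win_of_loss_memL h' List.mem_cons_self
  have h3 : MisereWin (add (node []) (node ts)) := h2
  exact win_zero_add.mp h3

end Game
namespace Game

theorem win_nil : MisereWin (node []) := (win_node []).mpr (Or.inl rfl)

theorem loss_g1 : ¬ MisereWin (nim 1) := by
  intro h
  rcases (win_node [nim 0]).mp (by rw [nim1_eq] at h; exact h) with h1 | ⟨x, hx, hw⟩
  · simp at h1
  · simp only [List.mem_cons, List.not_mem_nil, or_false] at hx
    subst hx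
    exact hw win_nil

theorem winL_zeroL {X T : Game} :
    MisereWin (add (add (nim 0) X) T) ↔ MisereWin (add X T) :=
  winL_congr T (ext_zeroL X)

theorem winL_zeroR {X T : Game} :
    MisereWin (add (add X (nim 0)) T) ↔ MisereWin (add X T) :=
  winL_congr T (ext_zeroR X)

theorem c4 : ∀ n (T : Game), sizeOf T ≤ n →
    (MisereWin (add (add (nim 1) (nim 1)) T) ↔ MisereWin T) := by
  intro n
  induction n with
  | zero => intro ⟨ts⟩ h; rw [size_node] at h; omega
  | succ n ih =>
    intro ⟨ts⟩ hn
    rw [size_node] at hn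
    rw [S11, win_add, win_node]
    constructor
    · rintro (⟨h1, -⟩ | ⟨a, ha, hl⟩ | ⟨t, ht, hl⟩)
      · simp at h1
      · simp only [List.mem_cons, List.not_mem_nil, or_false] at ha
        have key : ¬ MisereWin (add (nim 1) (node ts)) := by
          rcases ha with rfl | rfl
          · exact fun w => hl (winL_zeroL.mpr w)
          · exact fun w => hl (winL_zeroR.mpr w)
        have := win_of_loss_g1 key
        rw [win_node] at this; exact this
      · have hl2 : ¬ MisereWin (add (add (nim 1) (nim 1)) t) := by rw [S11]; exact hl
        have hl' : ¬ MisereWin t :=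
          fun w => hl2 ((ih t (by have := size_mem ht; omega)).mpr w)
        exact Or.inr ⟨t, ht, hl'⟩
    · rintro (rfl | ⟨t, ht, hl⟩)
      · refine Or.inr (Or.inl ⟨add (nim 0) (nim 1), by simp, fun w => ?_⟩)
        have w2 : MisereWin (add (nim 1) (node [])) := winL_zeroL.mp w
        exact loss_g1 ((ext_win (ext_zeroR (nim 1))).mp w2)
      · refine Or.inr (Or.inr ⟨t, ht, fun w => ?_⟩)
        rw [← S11] at w
        exact hl ((ih t (by have := size_mem ht; omega)).mp w)

end Game
namespace Game

theorem c3 : ∀ n (T : Game), sizeOf T ≤ n →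
    (MisereWin (add (add (nim 3) (nim 1)) T) ↔ MisereWin (add (nim 2) T)) := by
  intro n
  induction n with
  | zero => intro ⟨ts⟩ h; rw [size_node] at h; omega
  | succ n ih =>
    intro ⟨ts⟩ hn
    rw [size_node] at hn
    rw [S31, win_add]
    constructor
    · rintro (⟨h1, -⟩ | ⟨a, ha, hl⟩ | ⟨t, ht, hl⟩)
      · simp at h1
      · simp only [List.mem_cons, List.not_mem_nil, or_false] at ha
        rcases ha with rfl | rfl | rfl | rfl
        · -- option 0+*1 : *1+T is a loss ; play *2 → *1 in *2+T
          exact win_of_memL (l := [nim 0, nim 1]) (by simp)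
            (fun w => hl (winL_zeroL.mpr w))
        · -- option *1+*1 : T is a loss by c4 ; play *2 → 0 in *2+T
          have hT : ¬ MisereWin (node ts) :=
            fun w => hl ((c4 _ (node ts) le_rfl).mpr w)
          refine win_of_memL (l := [nim 0, nim 1]) (Y := nim 0) (by simp) (fun w => ?_)
          exact hT (win_zero_add.mp w)
        · -- option *2+*1 : its option *2+0 wins
          rw [S21] at hl
          have := win_of_loss_memL hl (show add (nim 2) (nim 0) ∈ _ by simp)
          exact winL_zeroR.mp this
        · -- option *3+0 : *3+T is a loss, its option *2+T wins
          have hl' : ¬ MisereWin (add (nim 3) (node ts)) :=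
            fun w => hl (winL_zeroR.mpr w)
          rw [nim3_eq] at hl'
          exact win_of_loss_memL hl' (show (nim 2) ∈ _ by simp)
      · have hl2 : ¬ MisereWin (add (add (nim 3) (nim 1)) t) := by rw [S31]; exact hl
        have hl' : ¬ MisereWin (add (nim 2) t) :=
          fun w => hl2 ((ih t (by have := size_mem ht; omega)).mpr w)
        exact win_of_memR (l := [nim 0, nim 1]) ht hl'
    · intro hw
      rw [nim2_eq, win_add] at hw
      rcases hw with ⟨h1, -⟩ | ⟨a, ha, hl⟩ | ⟨t, ht, hl⟩
      · simp at h1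
      · simp only [List.mem_cons, List.not_mem_nil, or_false] at ha
        rcases ha with rfl | rfl
        · -- 0+T loss : T loss, by c4 *1+*1+T loss
          have hT : ¬ MisereWin (node ts) := fun w => hl (win_zero_add.mpr w)
          refine Or.inr (Or.inl ⟨add (nim 1) (nim 1), by simp, fun w => ?_⟩)
          exact hT ((c4 _ (node ts) le_rfl).mp w)
        · -- *1+T loss : option 0+*1 loses
          exact Or.inr (Or.inl ⟨add (nim 0) (nim 1), by simp,
            fun w => hl (winL_zeroL.mp w)⟩)
      · have hl' : ¬ MisereWin (add (nim 2) t) := hl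
        refine Or.inr (Or.inr ⟨t, ht, fun w => ?_⟩)
        have w' : MisereWin (add (add (nim 3) (nim 1)) t) := by rw [S31]; exact w
        exact hl' ((ih t (by have := size_mem ht; omega)).mp w')

end Game
namespace Game

theorem c2 : ∀ n (T : Game), sizeOf T ≤ n →
    (MisereWin (add (add gB (nim 1)) T) ↔ MisereWin (add gA T)) := by
  intro n
  induction n with
  | zero => intro ⟨ts⟩ h; rw [size_node] at h; omega
  | succ n ih =>
    intro ⟨ts⟩ hn
    rw [size_node] at hn
    rw [SB1, win_add]
    constructor
    · rintro (⟨h1, -⟩ | ⟨a, ha, hl⟩ | ⟨t, ht, hl⟩)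
      · simp at h1
      · simp only [List.mem_cons, List.not_mem_nil, or_false] at ha
        rcases ha with rfl | rfl | rfl
        · -- *3+*1+T loss : by c3, *2+T loss ; *2 is an option of A
          have h2 : ¬ MisereWin (add (nim 2) (node ts)) :=
            fun w => hl ((c3 _ (node ts) le_rfl).mpr w)
          exact win_of_memL (l := [nim 2]) (by simp) h2
        · -- A+*1+T loss : its option A+0+T wins
          rw [SA1] at hl
          have := win_of_loss_memL hl (show add gA (nim 0) ∈ _ by simp)
          exact winL_zeroR.mp this
        · -- B+0+T loss : B+T loss, its option A+T wins
          have hl' : ¬ MisereWin (add (node [nim 3, gA]) (node ts)) :=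
            fun w => hl (winL_zeroR.mpr w)
          exact win_of_loss_memL hl' (show gA ∈ _ by simp)
      · have hl2 : ¬ MisereWin (add (add gB (nim 1)) t) := by rw [SB1]; exact hl
        have hl' : ¬ MisereWin (add gA t) :=
          fun w => hl2 ((ih t (by have := size_mem ht; omega)).mpr w)
        exact win_of_memR (l := [nim 2]) ht hl'
    · intro hw
      have hw' : MisereWin (add (node [nim 2]) (node ts)) := hw
      rw [win_add] at hw'
      rcases hw' with ⟨h1, -⟩ | ⟨a, ha, hl⟩ | ⟨t, ht, hl⟩
      · simp at h1
      · simp only [List.mem_cons, List.not_mem_nil, or_false] at ha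
        subst ha
        exact Or.inr (Or.inl ⟨add (nim 3) (nim 1), by simp,
          fun w => hl ((c3 _ (node ts) le_rfl).mp w)⟩)
      · refine Or.inr (Or.inr ⟨t, ht, fun w => ?_⟩)
        have w' : MisereWin (add (add gB (nim 1)) t) := by rw [SB1]; exact w
        exact hl ((ih t (by have := size_mem ht; omega)).mp w')

theorem c1 : ∀ n (T : Game), sizeOf T ≤ n →
    (MisereWin (add (add gG (nim 2)) T) ↔ MisereWin (add gA T)) := by
  intro n
  induction n with
  | zero => intro ⟨ts⟩ h; rw [size_node] at h; omega
  | succ n ih =>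
    intro ⟨ts⟩ hn
    rw [size_node] at hn
    rw [SG2, win_add]
    constructor
    · rintro (⟨h1, -⟩ | ⟨a, ha, hl⟩ | ⟨t, ht, hl⟩)
      · simp at h1
      · simp only [List.mem_cons, List.not_mem_nil, or_false] at ha
        rcases ha with rfl | rfl | rfl | rfl | rfl
        · -- 0+*2+T loss : *2+T loss, an option of A+T
          have h2 : ¬ MisereWin (add (nim 2) (node ts)) :=
            fun w => hl (winL_zeroL.mpr w)
          exact win_of_memL (l := [nim 2]) (by simp) h2
        · -- A+*2+T loss : its option A+0+T wins
          rw [SA2] at hl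
          have := win_of_loss_memL hl (show add gA (nim 0) ∈ _ by simp)
          exact winL_zeroR.mp this
        · -- B+*2+T loss : its option B+*1+T wins, apply c2
          rw [SB2] at hl
          have := win_of_loss_memL hl (show add gB (nim 1) ∈ _ by simp)
          exact (c2 _ (node ts) le_rfl).mp this
        · -- G+0+T loss : G+T loss, its option A+T wins
          have hl' : ¬ MisereWin (add (node [node [], gA, gB]) (node ts)) :=
            fun w => hl (winL_zeroR.mpr w)
          exact win_of_loss_memL hl' (show gA ∈ _ by simp)
        · -- G+*1+T loss : its option B+*1+T wins, apply c2
          rw [SG1] at hl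
          have := win_of_loss_memL hl (show add gB (nim 1) ∈ _ by simp)
          exact (c2 _ (node ts) le_rfl).mp this
      · have hl2 : ¬ MisereWin (add (add gG (nim 2)) t) := by rw [SG2]; exact hl
        have hl' : ¬ MisereWin (add gA t) :=
          fun w => hl2 ((ih t (by have := size_mem ht; omega)).mpr w)
        exact win_of_memR (l := [nim 2]) ht hl'
    · intro hw
      have hw' : MisereWin (add (node [nim 2]) (node ts)) := hw
      rw [win_add] at hw'
      rcases hw' with ⟨h1, -⟩ | ⟨a, ha, hl⟩ | ⟨t, ht, hl⟩
      · simp at h1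
      · simp only [List.mem_cons, List.not_mem_nil, or_false] at ha
        subst ha
        exact Or.inr (Or.inl ⟨add (node []) (nim 2), by simp,
          fun w => hl (winL_zeroL.mp w)⟩)
      · refine Or.inr (Or.inr ⟨t, ht, fun w => ?_⟩)
        have w' : MisereWin (add (add gG (nim 2)) t) := by rw [SG2]; exact w
        exact hl ((ih t (by have := size_mem ht; omega)).mp w')

end Game

open Game in
/-- With `A = {*2}`, `B = {*3; A}` and `G = {*0; A; B}`, the
sum `G + nim 2` is misère-indistinguishable from `A`. -/
theorem stmt16 :
    Indist
      (add (Game.node [Game.node [], Game.node [nim 2],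
              Game.node [nim 3, Game.node [nim 2]]]) (nim 2))
      (Game.node [nim 2]) := by
  intro T
  exact c1 _ T le_rfl
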